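/- Fix reals 0 < R₁ < R₂ < R with R·R₁ ≤ R₂², and α > 0. Let r₁ on [R₁, R₂] with density 2r/(R₂² − R₁²) and r₂ on [R₂, R] with density 2r/(R² − R₂²) be independent random variables, and for c > 0 let q(c) = P( r₂^{2α} ≥ c·r₁^{2α} ) (the noise-free probability that both paired backscatter signals are successfully decoded when c = γ·κ). Then: (i) q(c) = 1 if c ≤ 1; (ii) q(c) = (2R₂²R² + 2R₁²R₂² − 2R₁²R² − R₂⁴(c^{−1/α} + c^{1/α})) / (2(R₂² − R₁²)(R² − R₂²)) if 1 < c ≤ (R/R₂)^{2α}; (iii) q(c) = (2R₁²R₂² − 2R₁²R² + (R⁴ − R₂⁴)·c^{−1/α}) / (2(R₂² − R₁²)(R² − R₂²)) if (R/R₂)^{2α} < c ≤ (R₂/R₁)^{2α}; (iv) q(c) = (−2R₁²R² + R⁴·c^{−1/α} + R₁⁴·c^{1/α}) / (2(R₂² − R₁²)(R² − R₂²)) if (R₂/R₁)^{2α} < c ≤ (R/R₁)^{2α}; (v) q(c) = 0 if c > (R/R₁)^{2α}. -/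
import Mathlib


open MeasureTheory Set
open intervalIntegral


/-- The noise-free success probability `q(c) = P(r₂^{2α} ≥ c·r₁^{2α})`, where `r₁` has
density `2r/(R₂² − R₁²)` on `[R₁, R₂]` and `r₂` independently has density
`2r/(R² − R₂²)` on `[R₂, R]`, expressed as the double integral of the joint density
over the event. -/
noncomputable def noiseFreeSuccessProb (R₁ R₂ R α c : ℝ) : ℝ :=
  ∫ r₁ in R₁..R₂, ∫ r₂ in R₂..R,
    if c * r₁ ^ (2 * α) ≤ r₂ ^ (2 * α)
    then 2 * r₁ / (R₂ ^ 2 - R₁ ^ 2) * (2 * r₂ / (R ^ 2 - R₂ ^ 2)) else 0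

set_option linter.unnecessarySimpa false
set_option linter.unusedVariables false

lemma bcnf_ii (t D a b : ℝ) :
    IntervalIntegrable (fun r => if t ≤ r then 2 * r / D else 0) volume a b := by
  have he : (fun r : ℝ => if t ≤ r then 2 * r / D else 0)
      = (Ici t).indicator (fun r => 2 * r / D) := by
    funext r; simp [Set.indicator_apply, Set.mem_Ici]
  have h1 : IntervalIntegrable (fun r : ℝ => 2 * r / D) volume a b :=
    (((continuous_const.mul continuous_id).div_const D)).intervalIntegrable a b
  rw [he, intervalIntegrable_iff] at *
  exact h1.indicator measurableSet_Ici

lemma bcnf_inner (t R₂ R D : ℝ) (h2R : R₂ ≤ R) :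
    (∫ r in R₂..R, if t ≤ r then 2 * r / D else 0)
      = (R ^ 2 - (max R₂ (min t R)) ^ 2) / D := by
  set u := max R₂ (min t R) with hu
  have hu1 : R₂ ≤ u := le_max_left _ _
  have hu2 : u ≤ R := max_le h2R (min_le_right _ _)
  have hne : ∀ᵐ x : ℝ, x ≠ t := by
    refine (MeasureTheory.ae_iff).mpr ?_
    simpa using Real.volume_singleton
  have hsplit : (∫ r in R₂..u, if t ≤ r then 2 * r / D else 0)
      + (∫ r in u..R, if t ≤ r then 2 * r / D else 0)
      = ∫ r in R₂..R, if t ≤ r then 2 * r / D else 0 :=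
    integral_add_adjacent_intervals (bcnf_ii t D _ _) (bcnf_ii t D _ _)
  have h1 : (∫ r in R₂..u, if t ≤ r then 2 * r / D else 0) = 0 := by
    apply integral_zero_ae
    filter_upwards [hne] with r hrt hr
    rw [Set.uIoc_of_le hu1] at hr
    have hut : u ≤ max R₂ t := max_le_max le_rfl (min_le_left _ _)
    have : r < t := by
      rcases le_or_gt t R₂ with h | h
      · exact absurd (hr.2.trans (hut.trans (max_le le_rfl h))) (not_le.mpr hr.1)
      · exact lt_of_le_of_ne (hr.2.trans (hut.trans (max_le h.le le_rfl))) hrt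
    rw [if_neg (not_le.mpr this)]
  have h2 : (∫ r in u..R, if t ≤ r then 2 * r / D else 0) = ∫ r in u..R, 2 * r / D := by
    apply intervalIntegral.integral_congr_ae
    filter_upwards with r hr
    rw [Set.uIoc_of_le hu2] at hr
    rcases le_or_gt t R with h | h
    · have : t ≤ r := le_trans (le_trans (by simp [hu, h] : t ≤ u) hr.1.le) le_rfl
      rw [if_pos this]
    · have : u = R := by
        have : min t R = R := min_eq_right h.le
        simp [hu, this, max_eq_right h2R]
      rw [this] at hr
      exact absurd hr.2 (not_le.mpr hr.1)
  have h3 : (∫ r in u..R, 2 * r / D) = (R ^ 2 - u ^ 2) / D := by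
    have : (fun r : ℝ => 2 * r / D) = fun r => (2 / D) * r := by funext r; ring
    rw [this, intervalIntegral.integral_const_mul, integral_id]; ring
  rw [← hsplit, h1, h2, h3, zero_add]

lemma bcnf_poly (A B a b : ℝ) :
    (∫ r in a..b, (A * r + B * r ^ 3))
      = A * (b ^ 2 - a ^ 2) / 2 + B * (b ^ 4 - a ^ 4) / 4 := by
  rw [intervalIntegral.integral_add
      ((by fun_prop : Continuous fun r : ℝ => A * r).intervalIntegrable a b)
      ((by fun_prop : Continuous fun r : ℝ => B * r ^ 3).intervalIntegrable a b),
    intervalIntegral.integral_const_mul, intervalIntegral.integral_const_mul,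
    integral_id, integral_pow]
  norm_num; ring

lemma bcnf_step1 (R₁ R₂ R α c : ℝ) (h0 : 0 < R₁) (h12 : R₁ < R₂) (h2R : R₂ < R)
    (hα : 0 < α) (hc : 0 < c) :
    noiseFreeSuccessProb R₁ R₂ R α c
      = ∫ r₁ in R₁..R₂, 2 * r₁ / (R₂ ^ 2 - R₁ ^ 2) *
          ((R ^ 2 - (max R₂ (min (c ^ (1/(2*α)) * r₁) R)) ^ 2) / (R ^ 2 - R₂ ^ 2)) := by
  set s := c ^ (1/(2*α)) with hsdef
  have hs : 0 < s := Real.rpow_pos_of_pos hc _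
  have hs2α : s ^ (2*α) = c := by
    rw [hsdef, ← Real.rpow_mul hc.le, one_div, inv_mul_cancel₀ (by positivity : (2*α) ≠ 0),
      Real.rpow_one]
  unfold noiseFreeSuccessProb
  apply intervalIntegral.integral_congr
  intro r₁ hr₁
  rw [Set.uIcc_of_le h12.le] at hr₁
  have hr₁0 : 0 < r₁ := lt_of_lt_of_le h0 hr₁.1
  simp only
  rw [intervalIntegral.integral_congr
      (g := fun r₂ => 2 * r₁ / (R₂ ^ 2 - R₁ ^ 2) *
        (if s * r₁ ≤ r₂ then 2 * r₂ / (R ^ 2 - R₂ ^ 2) else 0)) ?_]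
  · rw [intervalIntegral.integral_const_mul, bcnf_inner _ _ _ _ h2R.le]
  · intro r₂ hr₂
    rw [Set.uIcc_of_le h2R.le] at hr₂
    have hr₂0 : 0 < r₂ := lt_of_lt_of_le (h0.trans h12) hr₂.1
    have hcs : c * r₁ ^ (2*α) = (s * r₁) ^ (2*α) := by
      rw [Real.mul_rpow hs.le hr₁0.le, hs2α]
    simp only [mul_ite, mul_zero]
    exact if_congr (by rw [hcs, Real.rpow_le_rpow_iff (by positivity) hr₂0.le (by positivity)])
      rfl rfl

lemma bcnf_piece_one (R₁ R₂ R s lo hi : ℝ) (hlh : lo ≤ hi) (h2R : R₂ < R)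
    (hD2 : R₂ ^ 2 - R₁ ^ 2 ≠ 0) (hD3 : R ^ 2 - R₂ ^ 2 ≠ 0)
    (hone : ∀ r ∈ Set.Icc lo hi, s * r ≤ R₂) :
    (∫ r in lo..hi, 2 * r / (R₂ ^ 2 - R₁ ^ 2) *
        ((R ^ 2 - (max R₂ (min (s * r) R)) ^ 2) / (R ^ 2 - R₂ ^ 2)))
      = (hi ^ 2 - lo ^ 2) / (R₂ ^ 2 - R₁ ^ 2) := by
  rw [intervalIntegral.integral_congr (g := fun r => (2 / (R₂ ^ 2 - R₁ ^ 2)) * r + 0 * r ^ 3) ?_,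
    bcnf_poly]
  · field_simp; try ring
  · intro r hr
    rw [Set.uIcc_of_le hlh] at hr
    have h1 : s * r ≤ R₂ := hone r hr
    simp only
    rw [min_eq_left (h1.trans h2R.le), max_eq_left h1]
    field_simp; try ring

lemma bcnf_piece_mid (R₁ R₂ R s lo hi : ℝ) (hlh : lo ≤ hi) (h2R : R₂ < R)
    (hD2 : R₂ ^ 2 - R₁ ^ 2 ≠ 0) (hD3 : R ^ 2 - R₂ ^ 2 ≠ 0)
    (hmid : ∀ r ∈ Set.Icc lo hi, R₂ ≤ s * r ∧ s * r ≤ R) :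
    (∫ r in lo..hi, 2 * r / (R₂ ^ 2 - R₁ ^ 2) *
        ((R ^ 2 - (max R₂ (min (s * r) R)) ^ 2) / (R ^ 2 - R₂ ^ 2)))
      = (R ^ 2 * (hi ^ 2 - lo ^ 2) - s ^ 2 * (hi ^ 4 - lo ^ 4) / 2)
          / ((R₂ ^ 2 - R₁ ^ 2) * (R ^ 2 - R₂ ^ 2)) := by
  rw [intervalIntegral.integral_congr
      (g := fun r => (2 * R ^ 2 / ((R₂ ^ 2 - R₁ ^ 2) * (R ^ 2 - R₂ ^ 2))) * r +
        (-(2 * s ^ 2) / ((R₂ ^ 2 - R₁ ^ 2) * (R ^ 2 - R₂ ^ 2))) * r ^ 3) ?_,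
    bcnf_poly]
  · field_simp; try ring
  · intro r hr
    rw [Set.uIcc_of_le hlh] at hr
    obtain ⟨h1, h2⟩ := hmid r hr
    simp only
    rw [min_eq_left h2, max_eq_right h1]
    field_simp; try ring

lemma bcnf_piece_zero (R₁ R₂ R s lo hi : ℝ) (hlh : lo ≤ hi) (h2R : R₂ < R)
    (hzero : ∀ r ∈ Set.Icc lo hi, R ≤ s * r) :
    (∫ r in lo..hi, 2 * r / (R₂ ^ 2 - R₁ ^ 2) *
        ((R ^ 2 - (max R₂ (min (s * r) R)) ^ 2) / (R ^ 2 - R₂ ^ 2)))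
      = 0 := by
  rw [intervalIntegral.integral_congr (g := fun r => (0:ℝ)) ?_, intervalIntegral.integral_const,
    smul_zero]
  intro r hr
  rw [Set.uIcc_of_le hlh] at hr
  have h1 : R ≤ s * r := hzero r hr
  simp only
  rw [min_eq_right h1, max_eq_right h2R.le]
  ring


set_option maxHeartbeats 1000000 in
/-- The asymptotic (noise-free) probability that both paired backscatter
nodes are successfully decoded, `q(c) = P(r₂^{2α} ≥ c·r₁^{2α})` with `c = γκ`, is given
by the five-case closed form, assuming `R·R₁ ≤ R₂²`. -/
theorem backcom_noise_free_p2_closed_form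
    (R₁ R₂ R α : ℝ) (h0 : 0 < R₁) (h12 : R₁ < R₂) (h2R : R₂ < R)
    (hRR : R * R₁ ≤ R₂ ^ 2) (hα : 0 < α) (c : ℝ) (hc : 0 < c) :
    (c ≤ 1 → noiseFreeSuccessProb R₁ R₂ R α c = 1) ∧
    (1 < c → c ≤ (R / R₂) ^ (2 * α) →
      noiseFreeSuccessProb R₁ R₂ R α c =
        (2 * R₂ ^ 2 * R ^ 2 + 2 * R₁ ^ 2 * R₂ ^ 2 - 2 * R₁ ^ 2 * R ^ 2 -
            R₂ ^ 4 * (c ^ (-(1 / α)) + c ^ (1 / α))) /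
          (2 * (R₂ ^ 2 - R₁ ^ 2) * (R ^ 2 - R₂ ^ 2))) ∧
    ((R / R₂) ^ (2 * α) < c → c ≤ (R₂ / R₁) ^ (2 * α) →
      noiseFreeSuccessProb R₁ R₂ R α c =
        (2 * R₁ ^ 2 * R₂ ^ 2 - 2 * R₁ ^ 2 * R ^ 2 + (R ^ 4 - R₂ ^ 4) * c ^ (-(1 / α))) /
          (2 * (R₂ ^ 2 - R₁ ^ 2) * (R ^ 2 - R₂ ^ 2))) ∧
    ((R₂ / R₁) ^ (2 * α) < c → c ≤ (R / R₁) ^ (2 * α) →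
      noiseFreeSuccessProb R₁ R₂ R α c =
        (-(2 * R₁ ^ 2 * R ^ 2) + R ^ 4 * c ^ (-(1 / α)) + R₁ ^ 4 * c ^ (1 / α)) /
          (2 * (R₂ ^ 2 - R₁ ^ 2) * (R ^ 2 - R₂ ^ 2))) ∧
    ((R / R₁) ^ (2 * α) < c → noiseFreeSuccessProb R₁ R₂ R α c = 0) := by
  have hR₂ : 0 < R₂ := h0.trans h12
  have hR : 0 < R := hR₂.trans h2R
  have hD2 : (0:ℝ) < R₂ ^ 2 - R₁ ^ 2 := by nlinarith
  have hD3 : (0:ℝ) < R ^ 2 - R₂ ^ 2 := by nlinarith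
  set s := c ^ (1/(2*α)) with hsdef
  have hs : 0 < s := Real.rpow_pos_of_pos hc _
  have h2α : (0:ℝ) < 2 * α := by linarith
  have hs2α : s ^ (2*α) = c := by
    rw [hsdef, ← Real.rpow_mul hc.le, one_div, inv_mul_cancel₀ h2α.ne', Real.rpow_one]
  have hpow : ∀ x : ℝ, 0 < x → (c ≤ x ^ (2*α) ↔ s ≤ x) := fun x hx => by
    rw [← hs2α, Real.rpow_le_rpow_iff hs.le hx.le h2α]
  have hltt : ∀ x : ℝ, 0 < x → (x ^ (2*α) < c ↔ x < s) := fun x hx => by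
    rw [← not_le, ← not_le, not_iff_not]
    exact hpow x hx
  have hs2 : s ^ 2 = c ^ (1/α) := by
    rw [← Real.rpow_natCast s 2, hsdef, ← Real.rpow_mul hc.le]
    congr 1
    push_cast
    field_simp
  have hcneg : c ^ (-(1/α)) = (s ^ 2)⁻¹ := by rw [Real.rpow_neg hc.le, hs2]
  have key := bcnf_step1 R₁ R₂ R α c h0 h12 h2R hα hc
  rw [← hsdef] at key
  have hgc : Continuous (fun r : ℝ => 2 * r / (R₂ ^ 2 - R₁ ^ 2) *
      ((R ^ 2 - (max R₂ (min (s * r) R)) ^ 2) / (R ^ 2 - R₂ ^ 2))) := by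
    apply Continuous.mul
    · fun_prop
    · apply Continuous.div_const
      apply Continuous.sub continuous_const
      exact (continuous_const.max (((continuous_const.mul continuous_id).min
        continuous_const))).pow 2
  refine ⟨fun hc1 => ?_, fun hc1 hc2 => ?_, fun hc1 hc2 => ?_, fun hc1 hc2 => ?_,
    fun hc1 => ?_⟩
  · -- case i
    have hs1 : s ≤ 1 := (hpow 1 one_pos).mp (by rwa [Real.one_rpow])
    rw [key, bcnf_piece_one R₁ R₂ R s R₁ R₂ h12.le h2R hD2.ne' hD3.ne'
      (fun r hr => by nlinarith [mul_nonneg (sub_nonneg.mpr hs1) (h0.le.trans hr.1), hr.2])]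
    exact div_self hD2.ne'
  · -- case ii
    have hs1 : 1 < s := (hltt 1 one_pos).mp (by rwa [Real.one_rpow])
    have hsu : s ≤ R / R₂ := (hpow _ (by positivity)).mp hc2
    have hsR₂ : s * R₂ ≤ R := (le_div_iff₀ hR₂).mp hsu
    set a := R₂ / s with hadef
    have hsa : s * a = R₂ := by rw [hadef]; field_simp
    have haR₁ : R₁ ≤ a := by
      rw [hadef, le_div_iff₀ hs]
      nlinarith [mul_le_mul_of_nonneg_left hsR₂ h0.le]
    have haR₂ : a ≤ R₂ := by rw [hadef]; exact div_le_self hR₂.le hs1.le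
    rw [key, ← intervalIntegral.integral_add_adjacent_intervals (b := a)
        (hgc.intervalIntegrable _ _) (hgc.intervalIntegrable _ _),
      bcnf_piece_one R₁ R₂ R s R₁ a haR₁ h2R hD2.ne' hD3.ne'
        (fun r hr => by nlinarith [mul_le_mul_of_nonneg_left hr.2 hs.le]),
      bcnf_piece_mid R₁ R₂ R s a R₂ haR₂ h2R hD2.ne' hD3.ne'
        (fun r hr => ⟨by nlinarith [mul_le_mul_of_nonneg_left hr.1 hs.le],
          by nlinarith [mul_le_mul_of_nonneg_left hr.2 hs.le]⟩),
      hcneg, ← hs2, hadef]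
    field_simp
    ring
  · -- case iii
    have hsl : R / R₂ < s := (hltt _ (by positivity)).mp hc1
    have hsu : s ≤ R₂ / R₁ := (hpow _ (by positivity)).mp hc2
    have hsR₁ : s * R₁ ≤ R₂ := (le_div_iff₀ h0).mp hsu
    have hRsR₂ : R < s * R₂ := (div_lt_iff₀ hR₂).mp hsl
    set a := R₂ / s with hadef
    set b := R / s with hbdef
    have hsa : s * a = R₂ := by rw [hadef]; field_simp
    have hsb : s * b = R := by rw [hbdef]; field_simp
    have haR₁ : R₁ ≤ a := by rw [hadef, le_div_iff₀ hs]; nlinarith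
    have hab : a ≤ b := by
      rw [hadef, hbdef, div_le_div_iff₀ hs hs]; nlinarith
    have hbR₂ : b ≤ R₂ := by rw [hbdef, div_le_iff₀ hs]; nlinarith
    rw [key, ← intervalIntegral.integral_add_adjacent_intervals (b := a)
        (hgc.intervalIntegrable _ _) (hgc.intervalIntegrable _ _),
      ← intervalIntegral.integral_add_adjacent_intervals (a := a) (b := b) (c := R₂)
        (hgc.intervalIntegrable _ _) (hgc.intervalIntegrable _ _),
      bcnf_piece_one R₁ R₂ R s R₁ a haR₁ h2R hD2.ne' hD3.ne'
        (fun r hr => by nlinarith [mul_le_mul_of_nonneg_left hr.2 hs.le]),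
      bcnf_piece_mid R₁ R₂ R s a b hab h2R hD2.ne' hD3.ne'
        (fun r hr => ⟨by nlinarith [mul_le_mul_of_nonneg_left hr.1 hs.le],
          by nlinarith [mul_le_mul_of_nonneg_left hr.2 hs.le]⟩),
      bcnf_piece_zero R₁ R₂ R s b R₂ hbR₂ h2R
        (fun r hr => by nlinarith [mul_le_mul_of_nonneg_left hr.1 hs.le]),
      hcneg, hadef, hbdef]
    field_simp
    ring
  · -- case iv
    have hsl : R₂ / R₁ < s := (hltt _ (by positivity)).mp hc1
    have hsu : s ≤ R / R₁ := (hpow _ (by positivity)).mp hc2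
    have hsR₁ : s * R₁ ≤ R := (le_div_iff₀ h0).mp hsu
    have hR₂sR₁ : R₂ < s * R₁ := (div_lt_iff₀ h0).mp hsl
    set b := R / s with hbdef
    have hsb : s * b = R := by rw [hbdef]; field_simp
    have hR₁b : R₁ ≤ b := by rw [hbdef, le_div_iff₀ hs]; nlinarith
    have hbR₂ : b ≤ R₂ := by
      rw [hbdef, div_le_iff₀ hs]
      nlinarith [mul_le_mul_of_nonneg_left hR₂sR₁.le hR₂.le]
    rw [key, ← intervalIntegral.integral_add_adjacent_intervals (b := b)
        (hgc.intervalIntegrable _ _) (hgc.intervalIntegrable _ _),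
      bcnf_piece_mid R₁ R₂ R s R₁ b hR₁b h2R hD2.ne' hD3.ne'
        (fun r hr => ⟨by nlinarith [mul_le_mul_of_nonneg_left hr.1 hs.le],
          by nlinarith [mul_le_mul_of_nonneg_left hr.2 hs.le]⟩),
      bcnf_piece_zero R₁ R₂ R s b R₂ hbR₂ h2R
        (fun r hr => by nlinarith [mul_le_mul_of_nonneg_left hr.1 hs.le]),
      hcneg, ← hs2, hbdef]
    field_simp
    ring
  · -- case v
    have hsl : R / R₁ < s := (hltt _ (by positivity)).mp hc1
    have hRsR₁ : R < s * R₁ := (div_lt_iff₀ h0).mp hsl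
    rw [key, bcnf_piece_zero R₁ R₂ R s R₁ R₂ h12.le h2R
      (fun r hr => by nlinarith [mul_le_mul_of_nonneg_left hr.1 hs.le])]
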